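/- Let 1/2 ≤ α < 1, 0 < ρ < 1/4 with ρ < α, and let G : [0,1] → ℝ^2 be the generalized Hilbert curve built on the overlapping squares F_n with expansion factor α and Cantor parametrization C_ρ (linearly interpolated off C_ρ). Then G is Hölder continuous with exponent log α / log ρ. -/

import Mathlib

open Set

/-- Given the values `v0 = h(0)` and `v1 = h(1)`, the unique traversal-order function
(as in Definition 2.1) with these values: `h(2) = -h(0)`, `h(3) = -h(1)`. -/
def hilbertOrder (v0 v1 : ℝ × ℝ) : Fin 4 → ℝ × ℝ := ![v0, v1, -v0, -v1]

/-- The traversal functions `f_{a_1 … a_n}` of the standard Hilbert algorithm, recursing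
on the string read backwards (head = last digit `a_n`). -/
def travRev : List (Fin 4) → Fin 4 → ℝ × ℝ
  | [] => hilbertOrder (-1, -1) (-1, 1)
  | a :: w =>
    let f := travRev w
    if a = 0 then hilbertOrder (f 0) (f 3)
    else if a = 3 then hilbertOrder (f 2) (f 1)
    else f

/-- The traversal function `f_{a_1 … a_n}` associated to the string `a_1 … a_n`. -/
def trav (w : List (Fin 4)) : Fin 4 → ℝ × ℝ := travRev w.reverse

/-- The limit value `G(t)` of the generalized Hilbert curve at the point of the Cantor
set with digit sequence `a` (so `a 0 = a_1`, etc.). -/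
noncomputable def GHlim (α : ℝ) (a : ℕ → Fin 4) : ℝ × ℝ :=
  (1 / 2, 1 / 2) + ∑' k : ℕ, (α ^ k / 4) • trav (List.ofFn fun i : Fin k => a i) (a k)

/-- The point of the Cantor set `C_ρ` with digit sequence `a`. -/
noncomputable def cantorPt (ρ : ℝ) (a : ℕ → Fin 4) : ℝ :=
  ((1 - ρ) / (3 * ρ)) * ∑' n : ℕ, (a n : ℝ) * ρ ^ (n + 1)

/-! ### Auxiliary lemmas -/

lemma GH.hilbertOrder_norm {v0 v1 : ℝ × ℝ} (h0 : ‖v0‖ ≤ 1) (h1 : ‖v1‖ ≤ 1) (i : Fin 4) :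
    ‖hilbertOrder v0 v1 i‖ ≤ 1 := by
  fin_cases i <;> simp [hilbertOrder, norm_neg, h0, h1]

lemma GH.travRev_norm (w : List (Fin 4)) (i : Fin 4) : ‖travRev w i‖ ≤ 1 := by
  induction w generalizing i with
  | nil =>
    apply GH.hilbertOrder_norm <;> simp [Prod.norm_def, abs_le] <;> norm_num
  | cons a w ih =>
    simp only [travRev]
    split
    · exact GH.hilbertOrder_norm (ih 0) (ih 3) i
    · split
      · exact GH.hilbertOrder_norm (ih 2) (ih 1) i
      · exact ih i

lemma GH.trav_norm (w : List (Fin 4)) (i : Fin 4) : ‖trav w i‖ ≤ 1 := GH.travRev_norm _ i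

section aux

variable {α ρ : ℝ} (hα0 : 0 < α) (hα2 : α < 1) (hρ0 : 0 < ρ) (hρ1 : ρ < 1/4)

include hα0 in
lemma GH.term_norm (a : ℕ → Fin 4) (k : ℕ) :
    ‖(α ^ k / 4) • trav (List.ofFn fun i : Fin k => a i) (a k)‖ ≤ α ^ k / 4 := by
  rw [norm_smul]
  calc ‖α ^ k / 4‖ * ‖trav (List.ofFn fun i : Fin k => a i) (a k)‖
      ≤ ‖α ^ k / 4‖ * 1 := mul_le_mul_of_nonneg_left (GH.trav_norm _ _) (norm_nonneg _)
    _ = α ^ k / 4 := by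
        have : (0:ℝ) ≤ α ^ k / 4 := by positivity
        rw [mul_one, Real.norm_eq_abs, abs_of_nonneg this]

include hα0 hα2 in
lemma GH.term_summable (a : ℕ → Fin 4) :
    Summable (fun k => (α ^ k / 4) • trav (List.ofFn fun i : Fin k => a i) (a k)) := by
  refine Summable.of_norm_bounded ?_ (GH.term_norm hα0 a)
  simpa [div_eq_mul_inv] using (summable_geometric_of_lt_one hα0.le hα2).mul_right (4:ℝ)⁻¹

include hα0 hα2 in
lemma GH.GHlim_dist (a b : ℕ → Fin 4) (n : ℕ) (hab : ∀ i, i < n → a i = b i) :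
    ‖GHlim α a - GHlim α b‖ ≤ α ^ n / (2 * (1 - α)) := by
  set ta := fun k => (α ^ k / 4) • trav (List.ofFn fun i : Fin k => a i) (a k) with hta
  set tb := fun k => (α ^ k / 4) • trav (List.ofFn fun i : Fin k => b i) (b k) with htb
  have hsa := GH.term_summable hα0 hα2 a
  have hsb := GH.term_summable hα0 hα2 b
  have hdiff : GHlim α a - GHlim α b = ∑' k, (ta k - tb k) := by
    rw [GHlim, GHlim, add_sub_add_left_eq_sub, ← Summable.tsum_sub hsa hsb]
  set g : ℕ → ℝ := fun k => if k < n then 0 else α ^ k / 2 with hg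
  have hgs : Summable g := by
    apply Summable.of_nonneg_of_le (fun k => by positivity)
      (fun k => ?_) ((summable_geometric_of_lt_one hα0.le hα2).mul_right (2:ℝ)⁻¹)
    simp only [hg]
    split
    · positivity
    · rw [div_eq_mul_inv]
  have hbound : ∀ k, ‖ta k - tb k‖ ≤ g k := by
    intro k
    simp only [hg]
    split
    · rename_i hk
      have h1 : (List.ofFn fun i : Fin k => a i) = (List.ofFn fun i : Fin k => b i) := by
        congr 1
        funext i
        exact hab i (lt_trans i.isLt hk)
      have h2 : a k = b k := hab k hk
      simp [hta, htb, h1, h2]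
    · calc ‖ta k - tb k‖ ≤ ‖ta k‖ + ‖tb k‖ := norm_sub_le _ _
        _ ≤ α ^ k / 4 + α ^ k / 4 :=
            add_le_add (GH.term_norm hα0 a k) (GH.term_norm hα0 b k)
        _ = α ^ k / 2 := by ring
  have hgsum : ∑' k, g k = α ^ n / (2 * (1 - α)) := by
    have hsplit := Summable.sum_add_tsum_nat_add n hgs
    have hz : ∑ i ∈ Finset.range n, g i = 0 := by
      apply Finset.sum_eq_zero
      intro i hi
      simp [hg, Finset.mem_range.mp hi]
    have ht : ∑' i : ℕ, g (i + n) = α ^ n / (2 * (1 - α)) := by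
      have he : ∀ i : ℕ, g (i + n) = (α ^ n / 2) * α ^ i := by
        intro i
        simp only [hg, if_neg (by omega : ¬ i + n < n)]
        rw [pow_add]
        ring
      rw [tsum_congr he, tsum_mul_left, tsum_geometric_of_lt_one hα0.le hα2]
      field_simp
    rw [← hsplit, hz, zero_add, ht]
  rw [hdiff, ← hgsum]
  exact tsum_of_norm_bounded hgs.hasSum hbound

lemma GH.fin4_cast_le (x : Fin 4) : (0:ℝ) ≤ (x:ℝ) ∧ (x:ℝ) ≤ 3 := by
  constructor
  · positivity
  · have : (x:ℕ) ≤ 3 := by omega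
    exact_mod_cast this

include hρ0 hρ1 in
lemma GH.cpt_summable (a : ℕ → Fin 4) : Summable (fun n : ℕ => (a n : ℝ) * ρ ^ (n + 1)) := by
  have hρlt : ρ < 1 := by linarith
  apply Summable.of_nonneg_of_le (fun n => by positivity) (fun n => ?_)
    (((summable_geometric_of_lt_one hρ0.le hρlt).mul_left (3 * ρ)))
  have := (GH.fin4_cast_le (a n)).2
  calc (a n : ℝ) * ρ ^ (n + 1) ≤ 3 * ρ ^ (n + 1) := by nlinarith [pow_nonneg hρ0.le (n+1)]
    _ = 3 * ρ * ρ ^ n := by ring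

include hρ0 hρ1 in
lemma GH.cantorPt_sep (a b : ℕ → Fin 4) (n : ℕ)
    (hab : ∀ i, i < n → a i = b i) (hn : a n ≠ b n) :
    ((1 - 4*ρ)/3) * ρ ^ n ≤ |cantorPt ρ a - cantorPt ρ b| := by
  have hρlt : ρ < 1 := by linarith
  set f : ℕ → ℝ := fun k => ((a k : ℝ) - (b k : ℝ)) * ρ ^ (k + 1) with hf
  have hfs : Summable f := by
    have := (GH.cpt_summable hρ0 hρ1 a).sub (GH.cpt_summable hρ0 hρ1 b)
    convert this using 2 with k
    all_goals first | rfl | (simp [hf]; ring)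
  have hdiff : cantorPt ρ a - cantorPt ρ b = ((1 - ρ) / (3 * ρ)) * ∑' k, f k := by
    rw [cantorPt, cantorPt, ← mul_sub,
      ← Summable.tsum_sub (GH.cpt_summable hρ0 hρ1 a) (GH.cpt_summable hρ0 hρ1 b)]
    congr 1
    apply tsum_congr
    intro k
    simp [hf]; ring
  have hsplit := Summable.sum_add_tsum_nat_add (n + 1) hfs
  have hz : ∑ i ∈ Finset.range (n + 1), f i = f n := by
    rw [Finset.sum_range_succ]
    have : ∑ i ∈ Finset.range n, f i = 0 := by
      apply Finset.sum_eq_zero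
      intro i hi
      simp [hf, hab i (Finset.mem_range.mp hi)]
    rw [this, zero_add]
  have htail : |∑' i : ℕ, f (i + (n + 1))| ≤ 3 * ρ ^ (n + 2) / (1 - ρ) := by
    have hbd : ∀ i : ℕ, ‖f (i + (n + 1))‖ ≤ (3 * ρ ^ (n + 2)) * ρ ^ i := by
      intro i
      rw [Real.norm_eq_abs, hf]
      simp only
      rw [abs_mul, abs_of_nonneg (by positivity : (0:ℝ) ≤ ρ ^ (i + (n+1) + 1))]
      have h1 : |(a (i + (n+1)) : ℝ) - (b (i + (n+1)) : ℝ)| ≤ 3 := by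
        have ha := GH.fin4_cast_le (a (i + (n+1)))
        have hb := GH.fin4_cast_le (b (i + (n+1)))
        rw [abs_le]; constructor <;> linarith [ha.1, ha.2, hb.1, hb.2]
      have h2 : ρ ^ (i + (n+1) + 1) = ρ ^ (n + 2) * ρ ^ i := by
        rw [← pow_add]; ring_nf
      rw [h2]
      have h3 : (0:ℝ) ≤ ρ ^ (n+2) * ρ ^ i := by positivity
      nlinarith
    have hgs : HasSum (fun i : ℕ => (3 * ρ ^ (n + 2)) * ρ ^ i) (3 * ρ ^ (n + 2) / (1 - ρ)) := by
      have := (hasSum_geometric_of_lt_one hρ0.le hρlt).mul_left (3 * ρ ^ (n + 2))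
      rw [div_eq_mul_inv]
      convert this using 1
    calc |∑' i : ℕ, f (i + (n + 1))| = ‖∑' i : ℕ, f (i + (n + 1))‖ := (Real.norm_eq_abs _).symm
      _ ≤ 3 * ρ ^ (n + 2) / (1 - ρ) := tsum_of_norm_bounded hgs hbd
  have hfn : ρ ^ (n + 1) ≤ |f n| := by
    rw [hf]
    simp only
    rw [abs_mul, abs_of_nonneg (by positivity : (0:ℝ) ≤ ρ ^ (n+1))]
    have h1 : (1:ℝ) ≤ |(a n : ℝ) - (b n : ℝ)| := by
      have hne : ((a n : ℕ) : ℤ) ≠ ((b n : ℕ) : ℤ) := by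
        intro h
        apply hn
        apply Fin.ext
        exact_mod_cast h
      have : (1:ℤ) ≤ |((a n : ℕ) : ℤ) - ((b n : ℕ) : ℤ)| :=
        Int.one_le_abs (sub_ne_zero.mpr hne)
      have h2 : ((a n : ℝ)) - (b n : ℝ) = (((a n : ℕ) : ℤ) - ((b n : ℕ) : ℤ) : ℤ) := by
        push_cast; ring
      rw [h2, ← Int.cast_abs]
      exact_mod_cast this
    nlinarith [pow_nonneg hρ0.le (n+1)]
  have hX : ρ ^ (n + 1) - 3 * ρ ^ (n + 2) / (1 - ρ) ≤ |∑' k, f k| := by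
    rw [← hsplit, hz]
    have h4 : |f n| ≤ |f n + ∑' i : ℕ, f (i + (n + 1))| + |∑' i : ℕ, f (i + (n + 1))| := by
      have := abs_add_le (f n + ∑' i : ℕ, f (i + (n + 1))) (-(∑' i : ℕ, f (i + (n + 1))))
      simpa using this
    linarith [hfn, htail, h4]
  have hc : (0:ℝ) < (1 - ρ) / (3 * ρ) := div_pos (by linarith) (by linarith)
  rw [hdiff, abs_mul, abs_of_nonneg hc.le]
  have key : ((1 - 4*ρ)/3) * ρ ^ n
      = ((1 - ρ) / (3 * ρ)) * (ρ ^ (n + 1) - 3 * ρ ^ (n + 2) / (1 - ρ)) := by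
    have h1 : (1:ℝ) - ρ ≠ 0 := by linarith
    have h2 : ρ ≠ 0 := hρ0.ne'
    field_simp
    ring
  rw [key]
  exact mul_le_mul_of_nonneg_left hX hc.le

include hρ0 hρ1 in
lemma GH.cantor_cont : Continuous (cantorPt ρ) := by
  have hρlt : ρ < 1 := by linarith
  apply Continuous.mul continuous_const
  apply continuous_tsum (f := fun n (a : ℕ → Fin 4) => (a n : ℝ) * ρ ^ (n + 1))
    (u := fun n => 3 * ρ ^ (n + 1))
  · intro n
    have h1 : Continuous (fun a : ℕ → Fin 4 => ((a n : ℝ))) := by fun_prop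
    exact h1.mul continuous_const
  · have := (summable_geometric_of_lt_one hρ0.le hρlt).mul_left (3 * ρ)
    apply this.congr
    intro n
    rw [pow_succ]
    ring
  · intro n a
    rw [Real.norm_eq_abs, abs_mul, abs_of_nonneg (by positivity : (0:ℝ) ≤ (a n : ℝ)),
      abs_of_nonneg (by positivity : (0:ℝ) ≤ ρ ^ (n + 1))]
    have h3 := (GH.fin4_cast_le (a n)).2
    nlinarith [pow_nonneg hρ0.le (n+1)]

include hρ0 hρ1 in
lemma GH.cantor_compact : IsCompact (Set.range (cantorPt ρ)) :=
  isCompact_range (GH.cantor_cont hρ0 hρ1)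

lemma GH.cantor_zero : (0:ℝ) ∈ Set.range (cantorPt ρ) := by
  refine ⟨fun _ => 0, ?_⟩
  simp [cantorPt]

include hρ0 hρ1 in
lemma GH.cantor_one : (1:ℝ) ∈ Set.range (cantorPt ρ) := by
  have hρlt : ρ < 1 := by linarith
  refine ⟨fun _ => 3, ?_⟩
  rw [cantorPt]
  have h1 : ∀ n : ℕ, ((3:Fin 4):ℝ) * ρ ^ (n+1) = (3*ρ) * ρ ^ n := by
    intro n
    have h30 : ((3:Fin 4):ℝ) = 3 := by
      rw [show ((3:Fin 4):ℕ) = 3 from rfl]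
      norm_num
    rw [h30, pow_succ]
    ring
  rw [tsum_congr h1, tsum_mul_left, tsum_geometric_of_lt_one hρ0.le hρlt]
  have h2 : (1:ℝ) - ρ ≠ 0 := by linarith
  field_simp

end aux

/-- Hölder estimate on the Cantor set itself. -/
lemma GH.lemA {α ρ : ℝ} (hα1 : 1 / 2 ≤ α) (hα2 : α < 1) (hρ0 : 0 < ρ)
    (hρ1 : ρ < 1 / 4) (hρα : ρ < α) (a b : ℕ → Fin 4) :
    ‖GHlim α a - GHlim α b‖ ≤
      ((1 / (2 * (1 - α))) / ((1 - 4 * ρ) / 3) ^ (Real.log α / Real.log ρ)) *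
        |cantorPt ρ a - cantorPt ρ b| ^ (Real.log α / Real.log ρ) := by
  have hα0 : (0:ℝ) < α := by linarith
  set θ := Real.log α / Real.log ρ with hθ
  have hc' : (0:ℝ) < (1 - 4 * ρ) / 3 := by linarith
  have hθ0 : 0 < θ := by
    have h1 : Real.log α < 0 := Real.log_neg hα0 hα2
    have h2 : Real.log ρ < 0 := Real.log_neg hρ0 (by linarith)
    exact div_pos_of_neg_of_neg h1 h2
  have hK : (0:ℝ) < 1 / (2 * (1 - α)) := by
    have : (0:ℝ) < 1 - α := by linarith
    positivity
  by_cases hab : a = b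
  · subst hab
    simp only [sub_self, norm_zero, abs_zero]
    rw [Real.zero_rpow hθ0.ne']
    simp
  · have hex : ∃ n, a n ≠ b n := by
      by_contra h
      push_neg at h
      exact hab (funext h)
    set n := Nat.find hex with hn
    have hne : a n ≠ b n := Nat.find_spec hex
    have hab' : ∀ i, i < n → a i = b i := fun i hi => not_not.mp (Nat.find_min hex hi)
    have h1 : ‖GHlim α a - GHlim α b‖ ≤ α ^ n / (2 * (1 - α)) :=
      GH.GHlim_dist hα0 hα2 a b n hab'
    have h2 : ((1 - 4*ρ)/3) * ρ ^ n ≤ |cantorPt ρ a - cantorPt ρ b| :=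
      GH.cantorPt_sep hρ0 hρ1 a b n hab' hne
    set D := |cantorPt ρ a - cantorPt ρ b| with hD
    have hρθ : ρ ^ θ = α := by
      have hlogρ : Real.log ρ ≠ 0 := (Real.log_neg hρ0 (by linarith)).ne
      rw [Real.rpow_def_of_pos hρ0, mul_comm, hθ, div_mul_cancel₀ _ hlogρ, Real.exp_log hα0]
    have h3 : (ρ ^ n : ℝ) ^ θ = α ^ n := by
      rw [← Real.rpow_natCast ρ n, ← Real.rpow_mul hρ0.le, mul_comm,
        Real.rpow_mul hρ0.le, hρθ, Real.rpow_natCast]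
    have h4 : ρ ^ n ≤ D / ((1 - 4*ρ)/3) := by
      rw [le_div_iff₀ hc']
      nlinarith [h2]
    have h5 : α ^ n ≤ D ^ θ / ((1 - 4*ρ)/3) ^ θ := by
      rw [← h3, ← Real.div_rpow (abs_nonneg _) hc'.le]
      exact Real.rpow_le_rpow (by positivity) h4 hθ0.le
    calc ‖GHlim α a - GHlim α b‖ ≤ α ^ n / (2 * (1 - α)) := h1
      _ = (1 / (2 * (1 - α))) * α ^ n := by ring
      _ ≤ (1 / (2 * (1 - α))) * (D ^ θ / ((1 - 4*ρ)/3) ^ θ) :=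
          mul_le_mul_of_nonneg_left h5 hK.le
      _ = ((1 / (2 * (1 - α))) / ((1 - 4 * ρ) / 3) ^ θ) * D ^ θ := by ring

/-- The generalized Hilbert curve `G` (the continuous function with the prescribed
values on `C_ρ`, linearly interpolated over the connection intervals) is Hölder
continuous with exponent `log α / log ρ`. -/
theorem stmt12 (α ρ : ℝ) (hα1 : 1 / 2 ≤ α) (hα2 : α < 1) (hρ0 : 0 < ρ)
    (hρ1 : ρ < 1 / 4) (hρα : ρ < α)
    (G : ℝ → ℝ × ℝ) (hGcont : ContinuousOn G (Icc 0 1))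
    (hGval : ∀ a : ℕ → Fin 4, G (cantorPt ρ a) = GHlim α a)
    (hGlin : ∀ s t : ℝ, 0 ≤ s → s < t → t ≤ 1 →
      Ioo s t ∩ Set.range (cantorPt ρ) = ∅ →
      ∀ u ∈ Icc s t, G u = G s + ((u - s) / (t - s)) • (G t - G s)) :
    ∃ C : ℝ, 0 < C ∧ ∀ s ∈ Icc (0:ℝ) 1, ∀ t ∈ Icc (0:ℝ) 1,
      ‖G s - G t‖ ≤ C * |s - t| ^ (Real.log α / Real.log ρ) := by
  have hα0 : (0:ℝ) < α := by linarith
  set θ := Real.log α / Real.log ρ with hθ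
  have hc' : (0:ℝ) < (1 - 4 * ρ) / 3 := by linarith
  have hlogα : Real.log α < 0 := Real.log_neg hα0 hα2
  have hlogρ : Real.log ρ < 0 := Real.log_neg hρ0 (by linarith)
  have hθ0 : 0 < θ := div_pos_of_neg_of_neg hlogα hlogρ
  have hθ1 : θ ≤ 1 := by
    rw [hθ, div_le_one_iff]
    right; right
    exact ⟨hlogρ, Real.log_le_log hρ0 hρα.le⟩
  set C₀ := (1 / (2 * (1 - α))) / ((1 - 4 * ρ) / 3) ^ θ with hC₀def
  have hC₀ : 0 < C₀ := by
    have h1 : (0:ℝ) < 1 - α := by linarith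
    have h2 : (0:ℝ) < ((1 - 4 * ρ) / 3) ^ θ := Real.rpow_pos_of_pos hc' θ
    positivity
  set Cs := Set.range (cantorPt ρ) with hCs
  have hcpt : IsCompact Cs := GH.cantor_compact hρ0 hρ1
  have hcl : IsClosed Cs := hcpt.isClosed
  have h0C : (0:ℝ) ∈ Cs := GH.cantor_zero
  have h1C : (1:ℝ) ∈ Cs := GH.cantor_one hρ0 hρ1
  have lemA : ∀ a b : ℕ → Fin 4,
      ‖GHlim α a - GHlim α b‖ ≤ C₀ * |cantorPt ρ a - cantorPt ρ b| ^ θ :=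
    fun a b => GH.lemA hα1 hα2 hρ0 hρ1 hρα a b
  -- the gap estimate
  have gap : ∀ p q : ℝ, p ∈ Cs → q ∈ Cs → 0 ≤ p → p < q → q ≤ 1 → Ioo p q ∩ Cs = ∅ →
      ∀ u, u ∈ Icc p q → ∀ v, v ∈ Icc p q → ‖G u - G v‖ ≤ C₀ * |u - v| ^ θ := by
    intro p q hpC hqC hp0 hpq hq1 hgap u hu v hv
    obtain ⟨a, ha⟩ := hpC
    obtain ⟨b, hb⟩ := hqC
    have hqp : 0 < q - p := sub_pos.mpr hpq
    have hGqp : ‖G q - G p‖ ≤ C₀ * (q - p) ^ θ := by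
      have ha' := hGval a
      have hb' := hGval b
      rw [ha] at ha'
      rw [hb] at hb'
      have h1 := lemA b a
      rw [hb, ha, abs_of_pos hqp] at h1
      rw [hb', ha']
      exact h1
    have hu' := hGlin p q hp0 hpq hq1 hgap u hu
    have hv' := hGlin p q hp0 hpq hq1 hgap v hv
    have hdiff : G u - G v = ((u - v)/(q - p)) • (G q - G p) := by
      rw [hu', hv', add_sub_add_left_eq_sub, ← sub_smul, div_sub_div_same]
      congr 2
      ring
    rw [hdiff, norm_smul, Real.norm_eq_abs]
    rcases eq_or_ne u v with h | h
    · have hrhs : (0:ℝ) ≤ C₀ * (0:ℝ) ^ θ := by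
        rw [Real.zero_rpow hθ0.ne', mul_zero]
      simp only [h, sub_self, zero_div, abs_zero, zero_mul]
      exact hrhs
    · have huv : 0 < |u - v| := abs_pos.mpr (sub_ne_zero.mpr h)
      have habs : |(u - v)/(q - p)| = |u - v|/(q - p) := by
        rw [abs_div, abs_of_pos hqp]
      have hle : |u - v| ≤ q - p := by
        rw [abs_le]
        constructor <;> [linarith [hu.1, hu.2, hv.1, hv.2]; linarith [hu.1, hu.2, hv.1, hv.2]]
      have hsplitq : (q - p) ^ θ = (q - p) * (q - p) ^ (θ - 1) := by
        have h1 := Real.rpow_add hqp 1 (θ - 1)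
        rw [show (1:ℝ) + (θ - 1) = θ by ring] at h1
        rw [h1, Real.rpow_one]
      have hsplitu : |u - v| * |u - v| ^ (θ - 1) = |u - v| ^ θ := by
        have h1 := Real.rpow_add huv 1 (θ - 1)
        rw [show (1:ℝ) + (θ - 1) = θ by ring] at h1
        rw [h1, Real.rpow_one]
      have hmono : (q - p) ^ (θ - 1) ≤ |u - v| ^ (θ - 1) :=
        Real.rpow_le_rpow_of_nonpos huv hle (by linarith)
      calc |(u - v)/(q - p)| * ‖G q - G p‖
          ≤ (|u - v|/(q - p)) * (C₀ * (q - p) ^ θ) := by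
            rw [habs]
            exact mul_le_mul_of_nonneg_left hGqp (by positivity)
        _ = C₀ * (|u - v| * (q - p) ^ (θ - 1)) := by
            rw [hsplitq]
            field_simp
        _ ≤ C₀ * (|u - v| * |u - v| ^ (θ - 1)) := by
            apply mul_le_mul_of_nonneg_left _ hC₀.le
            exact mul_le_mul_of_nonneg_left hmono huv.le
        _ = C₀ * |u - v| ^ θ := by rw [hsplitu]
  -- the one-sided key estimate
  have key : ∀ s t : ℝ, s ∈ Icc (0:ℝ) 1 → t ∈ Icc (0:ℝ) 1 → s ≤ t →
      ‖G s - G t‖ ≤ 3 * C₀ * |s - t| ^ θ := by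
    intro s t hs ht hst
    rcases eq_or_lt_of_le hst with rfl | hlt
    · simp [Real.zero_rpow hθ0.ne']
    have hrpow_st : (0:ℝ) ≤ |s - t| ^ θ := Real.rpow_nonneg (abs_nonneg _) θ
    have habs_st : |s - t| = t - s := by rw [abs_sub_comm]; exact abs_of_pos (by linarith)
    -- p : last Cantor point ≤ s ; q : first Cantor point ≥ t
    set A := Cs ∩ Icc 0 s with hA
    have hAne : A.Nonempty := ⟨0, h0C, le_refl 0, hs.1⟩
    have hAcpt : IsCompact A := hcpt.inter_right isClosed_Icc
    set p := sSup A with hp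
    have hpA : p ∈ A := hAcpt.isClosed.csSup_mem hAne hAcpt.bddAbove
    have hps : p ≤ s := csSup_le hAne (fun x hx => hx.2.2)
    set B := Cs ∩ Icc t 1 with hB
    have hBne : B.Nonempty := ⟨1, h1C, ht.2, le_refl 1⟩
    have hBcpt : IsCompact B := hcpt.inter_right isClosed_Icc
    set q := sInf B with hq
    have hqB : q ∈ B := hBcpt.isClosed.csInf_mem hBne hBcpt.bddBelow
    have htq : t ≤ q := le_csInf hBne (fun x hx => hx.2.1)
    by_cases hmid : (Cs ∩ Icc s t).Nonempty
    · -- there are Cantor points between s and t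
      set M := Cs ∩ Icc s t with hM
      have hMcpt : IsCompact M := hcpt.inter_right isClosed_Icc
      set u := sInf M with huDef
      set v := sSup M with hvDef
      have huM : u ∈ M := hMcpt.isClosed.csInf_mem hmid hMcpt.bddBelow
      have hvM : v ∈ M := hMcpt.isClosed.csSup_mem hmid hMcpt.bddAbove
      have hsu : s ≤ u := huM.2.1
      have hvt : v ≤ t := hvM.2.2
      have huv : u ≤ v := csInf_le_csSup hmid hMcpt.bddBelow hMcpt.bddAbove
      have hleft : ‖G s - G u‖ ≤ C₀ * |s - u| ^ θ := by
        rcases eq_or_lt_of_le hsu with heq | hsu'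
        · rw [heq]
          simp [Real.zero_rpow hθ0.ne']
        · have hsC : s ∉ Cs := by
            intro hc
            exact absurd (csInf_le hMcpt.bddBelow ⟨hc, le_refl s, hst⟩) (not_le.mpr hsu')
          have hpsne : p < s := lt_of_le_of_ne hps (fun h => hsC (h ▸ hpA.1))
          have hgap2 : Ioo p u ∩ Cs = ∅ := by
            ext c
            simp only [mem_inter_iff, mem_Ioo, mem_empty_iff_false, iff_false, not_and]
            rintro ⟨hc1, hc2⟩ hcC
            rcases le_or_gt c s with h | h
            · have hcA : c ∈ A := ⟨hcC, by constructor <;> [linarith [hpA.2.1]; exact h]⟩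
              exact absurd (le_csSup hAcpt.bddAbove hcA) (not_le.mpr hc1)
            · have hcM : c ∈ M := ⟨hcC, h.le, by linarith [huM.2.2]⟩
              exact absurd (csInf_le hMcpt.bddBelow hcM) (not_le.mpr hc2)
          exact gap p u hpA.1 huM.1 hpA.2.1 (lt_of_lt_of_le hpsne hsu)
            (le_trans huM.2.2 ht.2) hgap2 s ⟨hps, hsu⟩ u ⟨le_trans hps hsu, le_refl u⟩
      have hright : ‖G v - G t‖ ≤ C₀ * |v - t| ^ θ := by
        rcases eq_or_lt_of_le hvt with heq | hvt'
        · rw [heq]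
          simp [Real.zero_rpow hθ0.ne']
        · have htC : t ∉ Cs := by
            intro hc
            exact absurd (le_csSup hMcpt.bddAbove ⟨hc, hst, le_refl t⟩) (not_le.mpr hvt')
          have htqne : t < q := lt_of_le_of_ne htq (fun h => htC (h ▸ hqB.1))
          have hgap2 : Ioo v q ∩ Cs = ∅ := by
            ext c
            simp only [mem_inter_iff, mem_Ioo, mem_empty_iff_false, iff_false, not_and]
            rintro ⟨hc1, hc2⟩ hcC
            rcases le_or_gt t c with h | h
            · have hcB : c ∈ B := ⟨hcC, h, by linarith [hqB.2.2]⟩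
              exact absurd (csInf_le hBcpt.bddBelow hcB) (not_le.mpr hc2)
            · have hcM : c ∈ M := ⟨hcC, by linarith [hvM.2.1], h.le⟩
              exact absurd (le_csSup hMcpt.bddAbove hcM) (not_le.mpr hc1)
          exact gap v q hvM.1 hqB.1 (le_trans hs.1 hvM.2.1) (lt_of_le_of_lt hvt htqne)
            hqB.2.2 hgap2 v ⟨le_refl v, le_trans hvt htq⟩ t ⟨hvt, htq⟩
      have hmid2 : ‖G u - G v‖ ≤ C₀ * |u - v| ^ θ := by
        obtain ⟨a, ha⟩ := huM.1
        obtain ⟨b, hb⟩ := hvM.1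
        have ha' := hGval a
        have hb' := hGval b
        rw [ha] at ha'
        rw [hb] at hb'
        have h1 := lemA a b
        rw [ha, hb] at h1
        rw [ha', hb']
        exact h1
      have htri : ‖G s - G t‖ ≤ ‖G s - G u‖ + ‖G u - G v‖ + ‖G v - G t‖ := by
        have heq2 : G s - G t = (G s - G u) + (G u - G v) + (G v - G t) := by abel
        rw [heq2]
        calc ‖(G s - G u) + (G u - G v) + (G v - G t)‖
            ≤ ‖(G s - G u) + (G u - G v)‖ + ‖G v - G t‖ := norm_add_le _ _
          _ ≤ ‖G s - G u‖ + ‖G u - G v‖ + ‖G v - G t‖ := by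
              linarith [norm_add_le (G s - G u) (G u - G v)]
      have hb1 : |s - u| ^ θ ≤ |s - t| ^ θ := by
        apply Real.rpow_le_rpow (abs_nonneg _) _ hθ0.le
        rw [habs_st]
        rw [abs_le]
        constructor <;> [linarith; linarith]
      have hb2 : |u - v| ^ θ ≤ |s - t| ^ θ := by
        apply Real.rpow_le_rpow (abs_nonneg _) _ hθ0.le
        rw [habs_st]
        rw [abs_le]
        constructor <;> [linarith; linarith]
      have hb3 : |v - t| ^ θ ≤ |s - t| ^ θ := by
        apply Real.rpow_le_rpow (abs_nonneg _) _ hθ0.le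
        rw [habs_st]
        rw [abs_le]
        constructor <;> [linarith; linarith]
      have e1 : C₀ * |s - u| ^ θ ≤ C₀ * |s - t| ^ θ := mul_le_mul_of_nonneg_left hb1 hC₀.le
      have e2 : C₀ * |u - v| ^ θ ≤ C₀ * |s - t| ^ θ := mul_le_mul_of_nonneg_left hb2 hC₀.le
      have e3 : C₀ * |v - t| ^ θ ≤ C₀ * |s - t| ^ θ := mul_le_mul_of_nonneg_left hb3 hC₀.le
      calc ‖G s - G t‖ ≤ ‖G s - G u‖ + ‖G u - G v‖ + ‖G v - G t‖ := htri
        _ ≤ C₀ * |s - u| ^ θ + C₀ * |u - v| ^ θ + C₀ * |v - t| ^ θ := by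
            linarith [hleft, hmid2, hright]
        _ ≤ 3 * C₀ * |s - t| ^ θ := by linarith [e1, e2, e3]
    · -- no Cantor points between s and t : single gap
      have hgap0 : Ioo p q ∩ Cs = ∅ := by
        ext c
        simp only [mem_inter_iff, mem_Ioo, mem_empty_iff_false, iff_false, not_and]
        rintro ⟨hc1, hc2⟩ hcC
        rcases le_or_gt c s with h | h
        · have hcA : c ∈ A := ⟨hcC, by constructor <;> [linarith [hpA.2.1]; exact h]⟩
          exact absurd (le_csSup hAcpt.bddAbove hcA) (not_le.mpr hc1)
        · rcases le_or_gt t c with h' | h'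
          · have hcB : c ∈ B := ⟨hcC, h', by linarith [hqB.2.2]⟩
            exact absurd (csInf_le hBcpt.bddBelow hcB) (not_le.mpr hc2)
          · exact hmid ⟨c, hcC, h.le, h'.le⟩
      have hpq : p < q := lt_of_le_of_lt hps (lt_of_lt_of_le hlt htq)
      have h1 := gap p q hpA.1 hqB.1 hpA.2.1 hpq hqB.2.2 hgap0
        s ⟨hps, le_trans hst htq⟩ t ⟨le_trans hps hst, htq⟩
      calc ‖G s - G t‖ ≤ C₀ * |s - t| ^ θ := h1
        _ ≤ 3 * C₀ * |s - t| ^ θ := by nlinarith [hrpow_st, hC₀]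
  refine ⟨3 * C₀, by positivity, ?_⟩
  intro s hs t ht
  rcases le_total s t with h | h
  · exact key s t hs ht h
  · rw [norm_sub_rev, abs_sub_comm]
    exact key t s ht hs h
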